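/- Suppose the formal power series S(y) = Σ_{n≥0} s(n) y^n (coefficients in the ring of formal power series in q and z) satisfies S(y) − (1−yq)S(yq) = yzq·S(yq^k) with s(0)=1, for a positive integer k. Then s(n) = (−1)^n q^{n(n+1)/2} (z;q^{k−1})_n / (q;q)_n for all n ≥ 0. -/

import Mathlib

open scoped BigOperators

/-- The variable `q` in the ring `ℚ[[q,z]]` of formal power series in two variables. -/
noncomputable def qv : MvPowerSeries (Fin 2) ℚ := MvPowerSeries.X 0

/-- The variable `z` in the ring `ℚ[[q,z]]`. -/
noncomputable def zv : MvPowerSeries (Fin 2) ℚ := MvPowerSeries.X 1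

lemma tri (n : ℕ) : (n + 1) * (n + 1 + 1) / 2 = n * (n + 1) / 2 + (n + 1) := by
  have h : (n + 1) * (n + 1 + 1) = n * (n + 1) + (n + 1) * 2 := by ring
  rw [h, Nat.add_mul_div_right _ _ (by norm_num : (0:ℕ) < 2)]

lemma cc_qv : MvPowerSeries.constantCoeff qv = 0 := by
  simp [qv]

lemma cc_one_sub (m : ℕ) :
    MvPowerSeries.constantCoeff (1 - qv ^ (m + 1)) = 1 := by
  simp [map_sub, map_pow, cc_qv]

/-- If `S(y) = Σ s(n) yⁿ` (coefficients formal power series in `q, z`) satisfies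
`S(y) − (1−yq)S(yq) = yzq·S(yq^k)` and `s(0) = 1`, then
`s(n) = (−1)^n q^{n(n+1)/2} (z;q^{k−1})_n / (q;q)_n`. -/
theorem solve_q_difference_partitions (k : ℕ) (hk : 0 < k)
    (s : ℕ → MvPowerSeries (Fin 2) ℚ) (h0 : s 0 = 1)
    (hrec : PowerSeries.mk s -
        (1 - PowerSeries.C (R := MvPowerSeries (Fin 2) ℚ) qv * PowerSeries.X) *
          PowerSeries.mk (fun n => qv ^ n * s n) =
      PowerSeries.C (R := MvPowerSeries (Fin 2) ℚ) (zv * qv) * PowerSeries.X *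
        PowerSeries.mk (fun n => qv ^ (k * n) * s n)) :
    ∀ n : ℕ, s n = (-1) ^ n * qv ^ (n * (n + 1) / 2) *
      (∏ j ∈ Finset.range n, (1 - zv * qv ^ ((k - 1) * j))) *
      (∏ j ∈ Finset.range n, (1 - qv ^ (j + 1)))⁻¹ := by
  obtain ⟨k, rfl⟩ : ∃ k', k = k' + 1 := ⟨k - 1, (Nat.succ_pred_eq_of_pos hk).symm⟩
  intro n
  induction n with
  | zero => simpa using h0
  | succ n ih =>
    have hc := congrArg (PowerSeries.coeff (R := MvPowerSeries (Fin 2) ℚ) (n + 1)) hrec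
    rw [map_sub, sub_mul, one_mul, map_sub, mul_assoc, mul_assoc] at hc
    rw [PowerSeries.coeff_C_mul, PowerSeries.coeff_C_mul,
      PowerSeries.coeff_succ_X_mul, PowerSeries.coeff_succ_X_mul] at hc
    simp only [PowerSeries.coeff_mk] at hc
    -- hc : s (n+1) - (qv^(n+1) * s (n+1) - qv * (qv^n * s n))
    --      = zv * qv * (qv^((k+1)*n) * s n)
    have hexp : (k + 1) * n = k * n + n := by ring
    rw [hexp, pow_add] at hc
    have hstep : s (n + 1) * (1 - qv ^ (n + 1)) =
        -qv ^ (n + 1) * (1 - zv * qv ^ ((k + 1 - 1) * n)) * s n := by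
      simp only [Nat.add_sub_cancel]
      linear_combination hc
    have hinv := MvPowerSeries.eq_mul_inv_iff_mul_eq (σ := Fin 2) (k := ℚ)
      (φ₁ := s (n + 1))
      (φ₂ := -qv ^ (n + 1) * (1 - zv * qv ^ ((k + 1 - 1) * n)) * s n)
      (φ₃ := 1 - qv ^ (n + 1)) (by rw [cc_one_sub]; norm_num)
    have hs : s (n + 1) = -qv ^ (n + 1) * (1 - zv * qv ^ ((k + 1 - 1) * n)) * s n *
        (1 - qv ^ (n + 1))⁻¹ := hinv.mpr hstep
    rw [hs, ih]
    rw [Finset.prod_range_succ, Finset.prod_range_succ, tri, pow_add,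
      MvPowerSeries.mul_inv_rev, pow_succ (-1 : MvPowerSeries (Fin 2) ℚ)]
    ring
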